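/- arXiv:1503.03229 — 2 statements merged into one kernel-verified Lean document; each statement's English description precedes it below -/
import Mathlib

section
/- If Δ^α is Cohen–Macaulay over a field K for some α ∈ ℕ^n with positive entries, then Δ is Cohen–Macaulay over K. -/
open Finset

/-- An abstract simplicial complex on vertex type `V`: a downward closed
family of finite subsets of `V`. -/
structure AbstractComplex (V : Type*) where
  faces : Set (Finset V)
  down_closed : ∀ {s t : Finset V}, s ∈ faces → t ⊆ s → t ∈ faces

namespace AbstractComplex

variable {V : Type*}

/-- A facet is a maximal face. -/
def IsFacet (Δ : AbstractComplex V) (s : Finset V) : Prop :=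
  s ∈ Δ.faces ∧ ∀ t ∈ Δ.faces, s ⊆ t → s = t

/-- A complex is pure if all facets have the same cardinality. -/
def IsPure (Δ : AbstractComplex V) : Prop :=
  ∀ s t : Finset V, Δ.IsFacet s → Δ.IsFacet t → s.card = t.card

/-- The link of a (potential) face `F`. -/
def link [DecidableEq V] (Δ : AbstractComplex V) (F : Finset V) : AbstractComplex V where
  faces := {G | G ∩ F = ∅ ∧ G ∪ F ∈ Δ.faces}
  down_closed := by
    rintro s t ⟨h1, h2⟩ hts
    refine ⟨subset_empty.mp ?_, Δ.down_closed h2 (union_subset_union hts subset_rfl)⟩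
    exact h1 ▸ inter_subset_inter hts subset_rfl

/-- The faces of cardinality `q` (i.e. dimension `q - 1`). -/
abbrev Face (Δ : AbstractComplex V) (q : ℕ) := {s : Finset V // s ∈ Δ.faces ∧ s.card = q}

/-- The simplicial boundary map on reduced chains with coefficients in `K`,
from chains spanned by faces of cardinality `q+1` to those spanned by faces of
cardinality `q`. -/
noncomputable def boundary (K : Type*) [Field K] [LinearOrder V]
    (Δ : AbstractComplex V) (q : ℕ) :
    (Δ.Face (q + 1) →₀ K) →ₗ[K] (Δ.Face q →₀ K) :=
  Finsupp.lsum K fun s => LinearMap.toSpanSingleton K _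
    (∑ x ∈ s.1.attach,
      ((-1 : K) ^ (s.1.filter (fun y => y < x.1)).card) •
        Finsupp.single (⟨s.1.erase x.1,
          Δ.down_closed s.2.1 (erase_subset _ _), by
            rw [card_erase_of_mem x.2, s.2.2]; omega⟩ : Δ.Face q) (1 : K))

/-- `Δ.RHTriv K i` says that the `i`-th reduced simplicial homology of `Δ`
with coefficients in `K` vanishes. -/
def RHTriv (K : Type*) [Field K] [LinearOrder V] (Δ : AbstractComplex V) : ℤ → Prop
  | Int.ofNat i =>
      LinearMap.ker (Δ.boundary K i) ≤ LinearMap.range (Δ.boundary K (i + 1))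
  | Int.negSucc 0 => ⊤ ≤ LinearMap.range (Δ.boundary K 0)
  | Int.negSucc (_ + 1) => True

/-- `Δ.dimLT i` means `i < dim Δ`. -/
def dimLT (Δ : AbstractComplex V) (i : ℤ) : Prop :=
  ∃ s ∈ Δ.faces, i + 2 ≤ (s.card : ℤ)

/-- Cohen–Macaulayness over `K`, via Reisner's criterion. -/
def IsCM (K : Type*) [Field K] [LinearOrder V] (Δ : AbstractComplex V) : Prop :=
  ∀ F ∈ Δ.faces, ∀ i : ℤ, (Δ.link F).dimLT i → (Δ.link F).RHTriv K i

/-- `CM_t`: pure, and the link of every face of cardinality at least `t`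
is Cohen–Macaulay. -/
def IsCMt (K : Type*) [Field K] [LinearOrder V] (t : ℕ) (Δ : AbstractComplex V) : Prop :=
  Δ.IsPure ∧ ∀ F ∈ Δ.faces, t ≤ F.card → IsCM K (Δ.link F)

/-- Buchsbaum-ness: pure and the reduced homology of the link of every nonempty
face vanishes below its dimension. -/
def IsBuchsbaum (K : Type*) [Field K] [LinearOrder V] (Δ : AbstractComplex V) : Prop :=
  Δ.IsPure ∧ ∀ G ∈ Δ.faces, G ≠ ∅ →
    ∀ i : ℤ, (Δ.link G).dimLT i → (Δ.link G).RHTriv K i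

end AbstractComplex

/-- The expansion `F^α` of a finite vertex set. -/
def expandSet {V : Type*} (α : V → ℕ) (F : Finset V) : Finset (Σ i, Fin (α i)) :=
  F.sigma fun _ => Finset.univ

namespace AbstractComplex

/-- The expansion `Δ^α` of a simplicial complex: the complex generated by the
expansions of the facets of `Δ`. -/
def expand {V : Type*} (Δ : AbstractComplex V) (α : V → ℕ) :
    AbstractComplex (Σ i, Fin (α i)) where
  faces := {σ | ∃ F, Δ.IsFacet F ∧ σ ⊆ expandSet α F}
  down_closed := fun ⟨F, hF, hsub⟩ hts => ⟨F, hF, hts.trans hsub⟩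

end AbstractComplex

/-- A linear order on the expanded vertex set (lexicographic). -/
noncomputable instance sigmaFinLinearOrder {V : Type*} [LinearOrder V] {α : V → ℕ} :
    LinearOrder (Σ i, Fin (α i)) :=
  LinearOrder.lift' (toLex : (Σ i, Fin (α i)) → Σₗ i, Fin (α i)) toLex.injective

/-! ### Auxiliary development -/

set_option linter.unusedSectionVars false
set_option linter.unusedVariables false

attribute [-instance] Sigma.instLT_mathlib Sigma.instLE_mathlib Sigma.preorder Sigma.instPartialOrder Sigma.instDecidableEqSigma instDecidableEqSigma

section Aux

variable {V : Type*} [LinearOrder V] {α : V → ℕ}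

lemma sig_lt_iff {x y : Σ i, Fin (α i)} :
    x < y ↔ x.1 < y.1 ∨ ∃ h : x.1 = y.1, h.rec x.2 < y.2 := by
  show toLex x < toLex y ↔ _
  exact Sigma.Lex.lt_def

lemma sig_fst_le_of_lt {x y : Σ i, Fin (α i)} (h : x < y) : x.1 ≤ y.1 := by
  rcases sig_lt_iff.mp h with h | ⟨h, _⟩
  · exact h.le
  · exact h.le

lemma sig_lt_of_fst_lt {x y : Σ i, Fin (α i)} (h : x.1 < y.1) : x < y :=
  sig_lt_iff.mpr (Or.inl h)

/-- The canonical embedding of vertices into the expanded vertex set. -/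
def ι0 (hα : ∀ i, 1 ≤ α i) (x : V) : Σ i, Fin (α i) := ⟨x, ⟨0, hα x⟩⟩

lemma ι0_injective (hα : ∀ i, 1 ≤ α i) : Function.Injective (ι0 (α := α) hα) :=
  fun _ _ h => congrArg Sigma.fst h

lemma ι0_lt_ι0 (hα : ∀ i, 1 ≤ α i) {a b : V} : ι0 hα a < ι0 hα b ↔ a < b := by
  constructor
  · intro h
    rcases lt_or_eq_of_le (sig_fst_le_of_lt h) with h' | h'
    · exact h'
    · exact absurd (congrArg (ι0 hα) h') (ne_of_lt h)
  · exact fun h => sig_lt_of_fst_lt h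

lemma mem_expandSet {x : Σ i, Fin (α i)} {F : Finset V} :
    x ∈ expandSet α F ↔ x.1 ∈ F := by
  obtain ⟨i, a⟩ := x
  simp [expandSet, Finset.mem_sigma]

lemma expandSet_mono {F G : Finset V} (h : F ⊆ G) : expandSet α F ⊆ expandSet α G :=
  fun x hx => mem_expandSet.mpr (h (mem_expandSet.mp hx))

namespace AbstractComplex

lemma ext' {Δ₁ Δ₂ : AbstractComplex V} (h : Δ₁.faces = Δ₂.faces) : Δ₁ = Δ₂ := by
  cases Δ₁; cases Δ₂; cases h; rfl

lemma exists_facet [Fintype V] (Λ : AbstractComplex V) {s : Finset V} (hs : s ∈ Λ.faces) :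
    ∃ F, Λ.IsFacet F ∧ s ⊆ F := by
  classical
  obtain ⟨F, hF, hmax⟩ := Finset.exists_max_image
    (Finset.univ.filter (fun t => t ∈ Λ.faces ∧ s ⊆ t)) Finset.card
    ⟨s, by simp [hs]⟩
  simp only [Finset.mem_filter, Finset.mem_univ, true_and] at hF hmax
  refine ⟨F, ⟨hF.1, fun t ht hFt => Finset.eq_of_subset_of_card_le hFt ?_⟩, hF.2⟩
  exact hmax t (by simp [ht, hF.2.trans hFt])

lemma pi_mem_faces (Λ : AbstractComplex V) {σ : Finset (Σ i, Fin (α i))}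
    (hσ : σ ∈ (Λ.expand α).faces) : σ.image Sigma.fst ∈ Λ.faces := by
  obtain ⟨F, hF, hsub⟩ := hσ
  refine Λ.down_closed hF.1 ?_
  intro u hu
  obtain ⟨x, hx, rfl⟩ := Finset.mem_image.mp hu
  exact mem_expandSet.mp (hsub hx)

lemma iF_mem_faces [Fintype V] (Λ : AbstractComplex V) (hα : ∀ i, 1 ≤ α i) {s : Finset V}
    (hs : s ∈ Λ.faces) : s.image (ι0 hα) ∈ (Λ.expand α).faces := by
  obtain ⟨F, hF, hsF⟩ := Λ.exists_facet hs
  refine ⟨F, hF, ?_⟩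
  intro x hx
  obtain ⟨y, hy, rfl⟩ := mem_image.mp hx
  exact mem_expandSet.mpr (hsF hy)

lemma card_iF (hα : ∀ i, 1 ≤ α i) (s : Finset V) : (s.image (ι0 hα)).card = s.card :=
  Finset.card_image_of_injective _ (ι0_injective hα)

lemma pi_iF (hα : ∀ i, 1 ≤ α i) (s : Finset V) :
    (s.image (ι0 hα)).image Sigma.fst = s := by
  rw [Finset.image_image]
  exact Finset.image_id

end AbstractComplex

end Aux
section Chain

open AbstractComplex

variable (K : Type*) [Field K] {V : Type*} [LinearOrder V] [Fintype V] {α : V → ℕ}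
  (hα : ∀ i, 1 ≤ α i) (Λ : AbstractComplex V)

/-- The chain map induced by the vertex embedding `ι0`. -/
noncomputable def Imap (q : ℕ) : (Λ.Face q →₀ K) →ₗ[K] ((Λ.expand α).Face q →₀ K) :=
  Finsupp.lsum K fun s => LinearMap.toSpanSingleton K _
    (Finsupp.single ⟨s.1.image (ι0 hα), Λ.iF_mem_faces hα s.2.1,
      by rw [card_iF, s.2.2]⟩ (1 : K))

/-- The chain map induced by the vertex projection `Sigma.fst`. -/
noncomputable def Pmap (q : ℕ) : ((Λ.expand α).Face q →₀ K) →ₗ[K] (Λ.Face q →₀ K) :=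
  Finsupp.lsum K fun σ => LinearMap.toSpanSingleton K _
    (if h : (σ.1.image Sigma.fst).card = q then
      Finsupp.single ⟨σ.1.image Sigma.fst, Λ.pi_mem_faces σ.2.1, h⟩ (1 : K) else 0)

lemma Pmap_comp_Imap (q : ℕ) :
    (Pmap K Λ q).comp (Imap K hα Λ q) = LinearMap.id := by
  refine Finsupp.lhom_ext fun s b => ?_
  simp only [LinearMap.comp_apply, LinearMap.id_apply, Imap, Finsupp.lsum_single,
    LinearMap.toSpanSingleton_apply]
  rw [map_smul]
  simp only [Pmap, Finsupp.lsum_single, LinearMap.toSpanSingleton_apply, one_smul]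
  have hc : ((s.1.image (ι0 hα)).image Sigma.fst).card = q := by
    rw [pi_iF, s.2.2]
  rw [dif_pos hc]
  have : (⟨(s.1.image (ι0 hα)).image Sigma.fst, Λ.pi_mem_faces (Λ.iF_mem_faces hα s.2.1),
      hc⟩ : Λ.Face q) = s := Subtype.ext (pi_iF hα s.1)
  rw [this, Finsupp.smul_single', mul_one]

end Chain
section ChainI

open AbstractComplex

variable (K : Type*) [Field K] {V : Type*} [LinearOrder V] [Fintype V] {α : V → ℕ}
  (hα : ∀ i, 1 ≤ α i) (Λ : AbstractComplex V)

lemma boundary_comp_Imap (q : ℕ) :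
    ((Λ.expand α).boundary K q).comp (Imap K hα Λ (q+1)) =
      (Imap K hα Λ q).comp (Λ.boundary K q) := by
  refine Finsupp.lhom_ext fun s b => ?_
  have hb : (Finsupp.single s b) = b • Finsupp.single s (1:K) := by
    rw [Finsupp.smul_single', mul_one]
  rw [hb]
  simp only [LinearMap.comp_apply, map_smul]
  congr 1
  simp only [Imap, Finsupp.lsum_single, LinearMap.toSpanSingleton_apply, one_smul,
    AbstractComplex.boundary, map_sum, map_smul]
  refine (Finset.sum_bij (fun (y : {z // z ∈ s.1}) _ =>
      (⟨ι0 hα y.1, Finset.mem_image_of_mem _ y.2⟩ : {w // w ∈ s.1.image (ι0 hα)}))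
      (fun _ _ => Finset.mem_attach _ _) ?_ ?_ ?_).symm
  · intro y₁ h₁ y₂ h₂ h
    exact Subtype.ext (ι0_injective hα (by simpa [Subtype.ext_iff] using h))
  · intro x _
    obtain ⟨y, hy, hxy⟩ := Finset.mem_image.mp x.2
    exact ⟨⟨y, hy⟩, Finset.mem_attach _ _, Subtype.ext hxy⟩
  · intro y hy
    have hsign : (s.1.image (ι0 hα)).filter (fun w => w < ι0 hα y.1) =
        (s.1.filter (fun z => z < y.1)).image (ι0 hα) := by
      ext w
      simp only [Finset.mem_filter, Finset.mem_image]
      constructor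
      · rintro ⟨⟨z, hz, rfl⟩, hlt⟩
        exact ⟨z, ⟨hz, (ι0_lt_ι0 hα).mp hlt⟩, rfl⟩
      · rintro ⟨z, ⟨hz, hlt⟩, rfl⟩
        exact ⟨⟨z, hz, rfl⟩, (ι0_lt_ι0 hα).mpr hlt⟩
    have h1 : ((s.1.image (ι0 hα)).filter (fun w => w < ι0 hα y.1)).card =
        (s.1.filter (fun z => z < y.1)).card := by
      rw [hsign, Finset.card_image_of_injective _ (ι0_injective hα)]
    dsimp only
    rw [h1]
    congr 1
    · congr 1
      simp only [Subtype.mk.injEq]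
      ext w
      simp only [Finset.mem_erase, Finset.mem_image]
      constructor
      · rintro ⟨z, ⟨hzy, hz⟩, rfl⟩
        exact ⟨fun h => hzy (ι0_injective hα h), z, hz, rfl⟩
      · rintro ⟨hne, z, hz, rfl⟩
        exact ⟨z, ⟨fun h => hne (by rw [h]), hz⟩, rfl⟩

end ChainI
section ChainP

open AbstractComplex

variable (K : Type*) [Field K] {V : Type*} [LinearOrder V] [Fintype V] {α : V → ℕ}
  (hα : ∀ i, 1 ≤ α i) (Λ : AbstractComplex V)

lemma boundary_single {W : Type*} [LinearOrder W] (Δ : AbstractComplex W) (q : ℕ)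
    (s : Δ.Face (q + 1)) :
    Δ.boundary K q (Finsupp.single s (1:K)) =
      ∑ x ∈ s.1.attach, ((-1 : K) ^ (s.1.filter (fun y => y < x.1)).card) •
        Finsupp.single (⟨s.1.erase x.1, Δ.down_closed s.2.1 (Finset.erase_subset _ _), by
          have h5 := s.2.2; rw [Finset.card_erase_of_mem x.2]; omega⟩ : Δ.Face q) (1 : K) := by
  simp only [AbstractComplex.boundary, Finsupp.lsum_single, LinearMap.toSpanSingleton_apply,
    one_smul]

lemma Pmap_single_eq {q : ℕ} (σ : (Λ.expand α).Face q) (t : Finset V) (ht : t ∈ Λ.faces)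
    (hc : t.card = q) (him : σ.1.image Sigma.fst = t) :
    Pmap K Λ q (Finsupp.single σ (1:K)) = Finsupp.single (⟨t, ht, hc⟩ : Λ.Face q) 1 := by
  subst him
  simp only [Pmap, Finsupp.lsum_single, LinearMap.toSpanSingleton_apply, one_smul]
  rw [dif_pos hc]

lemma Pmap_single_neg {q : ℕ} (σ : (Λ.expand α).Face q)
    (h : ¬ (σ.1.image Sigma.fst).card = q) :
    Pmap K Λ q (Finsupp.single σ (1:K)) = 0 := by
  simp only [Pmap, Finsupp.lsum_single, LinearMap.toSpanSingleton_apply, one_smul]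
  rw [dif_neg h]

lemma boundary_comp_Pmap (q : ℕ) :
    (Λ.boundary K q).comp (Pmap K Λ (q+1) (α := α)) =
      (Pmap K Λ q (α := α)).comp ((Λ.expand α).boundary K q) := by
  classical
  refine Finsupp.lhom_ext fun σ b => ?_
  have hb : (Finsupp.single σ b) = b • Finsupp.single σ (1:K) := by
    rw [Finsupp.smul_single', mul_one]
  rw [hb]
  simp only [LinearMap.comp_apply, map_smul]
  congr 1
  by_cases hinj : (σ.1.image Sigma.fst).card = q + 1
  · -- injective case
    have hinjOn : Set.InjOn (Sigma.fst (β := fun i => Fin (α i))) ↑σ.1 :=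
      Finset.card_image_iff.mp (hinj.trans σ.2.2.symm)
    have herase_card : ∀ x : Σ i, Fin (α i), x ∈ σ.1 →
        ((σ.1.erase x).image Sigma.fst).card = q := by
      intro x hx
      have h5 := σ.2.2
      rw [Finset.card_image_of_injOn (hinjOn.mono (Finset.coe_subset.mpr
        (Finset.erase_subset _ _))), Finset.card_erase_of_mem hx]
      omega
    have herase_img : ∀ x : Σ i, Fin (α i), x ∈ σ.1 →
        (σ.1.erase x).image Sigma.fst = (σ.1.image Sigma.fst).erase x.1 := by
      intro x hx
      ext u
      simp only [Finset.mem_image, Finset.mem_erase]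
      constructor
      · rintro ⟨z, ⟨hzx, hz⟩, rfl⟩
        exact ⟨fun h => hzx (hinjOn hz hx h), z, hz, rfl⟩
      · rintro ⟨hne, z, hz, rfl⟩
        exact ⟨z, ⟨fun h => hne (by rw [h]), hz⟩, rfl⟩
    rw [Pmap_single_eq K Λ σ _ (Λ.pi_mem_faces σ.2.1) hinj rfl, boundary_single,
      boundary_single, map_sum]
    simp only [map_smul]
    refine (Finset.sum_bij (fun (x : {z // z ∈ σ.1}) _ =>
        (⟨x.1.1, Finset.mem_image_of_mem _ x.2⟩ : {u // u ∈ σ.1.image Sigma.fst}))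
        (fun _ _ => Finset.mem_attach _ _) ?_ ?_ ?_).symm
    · intro x₁ h₁ x₂ h₂ h
      exact Subtype.ext (hinjOn x₁.2 x₂.2 (by simpa [Subtype.ext_iff] using h))
    · intro u _
      obtain ⟨z, hz, hzu⟩ := Finset.mem_image.mp u.2
      exact ⟨⟨z, hz⟩, Finset.mem_attach _ _, Subtype.ext hzu⟩
    · intro x hx
      rw [Pmap_single_eq K Λ _ ((σ.1.image Sigma.fst).erase x.1.1)
        (Λ.down_closed (Λ.pi_mem_faces σ.2.1) (Finset.erase_subset _ _))
        (by have h5 := hinj; rw [Finset.card_erase_of_mem (Finset.mem_image_of_mem _ x.2)]; omega)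
        (herase_img x.1 x.2)]
      have hsgn : ((σ.1.image Sigma.fst).filter (fun u => u < x.1.1)).card =
          (σ.1.filter (fun z => z < x.1)).card := by
        have himg : (σ.1.image Sigma.fst).filter (fun u => u < x.1.1) =
            (σ.1.filter (fun z => z < x.1)).image Sigma.fst := by
          ext u
          simp only [Finset.mem_filter, Finset.mem_image]
          constructor
          · rintro ⟨⟨z, hz, rfl⟩, hlt⟩
            exact ⟨z, ⟨hz, sig_lt_of_fst_lt hlt⟩, rfl⟩
          · rintro ⟨z, ⟨hz, hlt⟩, rfl⟩
            refine ⟨⟨z, hz, rfl⟩, ?_⟩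
            rcases lt_or_eq_of_le (sig_fst_le_of_lt hlt) with h | h
            · exact h
            · exact absurd (hinjOn hz x.2 h) (ne_of_lt hlt)
        rw [himg, Finset.card_image_of_injOn (hinjOn.mono (Finset.coe_subset.mpr
          (Finset.filter_subset _ _)))]
      rw [hsgn]
  · -- non-injective case
    rw [Pmap_single_neg K Λ σ hinj, map_zero, boundary_single, map_sum]
    simp only [map_smul]
    have hninjOn : ¬ Set.InjOn (Sigma.fst (β := fun i => Fin (α i))) ↑σ.1 :=
      fun h => hinj ((Finset.card_image_iff.mpr h).trans σ.2.2)
    by_cases hex : ∃ a ∈ σ.1, Set.InjOn Sigma.fst ((σ.1.erase a : Finset (Σ i, Fin (α i))) : Set (Σ i, Fin (α i)))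
    · obtain ⟨a, ha, hainj⟩ := hex
      have hcol : ∃ c ∈ σ.1, c ≠ a ∧ c.1 = a.1 := by
        by_contra hc
        push_neg at hc
        apply hninjOn
        intro u hu v hv huv
        by_contra hne
        rcases eq_or_ne u a with rfl | hua
        · exact hc v hv (fun h => hne h.symm) huv.symm
        · rcases eq_or_ne v a with rfl | hva
          · exact hc u hu hua huv
          · exact hne (hainj (Finset.mem_coe.mpr (Finset.mem_erase.mpr ⟨hua, hu⟩))
              (Finset.mem_coe.mpr (Finset.mem_erase.mpr ⟨hva, hv⟩)) huv)
      obtain ⟨c, hcσ, hca, hca1⟩ := hcol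
      have hcinj : Set.InjOn Sigma.fst ((σ.1.erase c : Finset (Σ i, Fin (α i))) : Set (Σ i, Fin (α i))) := by
        intro u hu v hv huv
        have hu' := Finset.mem_erase.mp (Finset.mem_coe.mp hu)
        have hv' := Finset.mem_erase.mp (Finset.mem_coe.mp hv)
        by_contra hne
        rcases eq_or_ne u a with rfl | hua
        · -- v ≠ u = a, v ≠ c, v.1 = a.1 = c.1; v, c ∈ erase a with same fst
          have : v = c := hainj (Finset.mem_coe.mpr (Finset.mem_erase.mpr
              ⟨fun h => hne h.symm, hv'.2⟩))
            (Finset.mem_coe.mpr (Finset.mem_erase.mpr ⟨hca, hcσ⟩)) (huv.symm.trans hca1.symm)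
          exact hv'.1 this
        · rcases eq_or_ne v a with rfl | hva
          · have : u = c := hainj (Finset.mem_coe.mpr (Finset.mem_erase.mpr ⟨hua, hu'.2⟩))
              (Finset.mem_coe.mpr (Finset.mem_erase.mpr ⟨hca, hcσ⟩)) (huv.trans hca1.symm)
            exact hu'.1 this
          · exact hne (hainj (Finset.mem_coe.mpr (Finset.mem_erase.mpr ⟨hua, hu'.2⟩))
              (Finset.mem_coe.mpr (Finset.mem_erase.mpr ⟨hva, hv'.2⟩)) huv)
      -- reorder so that a' < b'
      obtain ⟨a', b', ha', hb', hne', hfst', hainj', hbinj', hab'⟩ :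
          ∃ a' b' : Σ i, Fin (α i), a' ∈ σ.1 ∧ b' ∈ σ.1 ∧ a' ≠ b' ∧ a'.1 = b'.1 ∧
            Set.InjOn Sigma.fst ((σ.1.erase a' : Finset (Σ i, Fin (α i))) : Set (Σ i, Fin (α i))) ∧ Set.InjOn Sigma.fst ((σ.1.erase b' : Finset (Σ i, Fin (α i))) : Set (Σ i, Fin (α i))) ∧
            a' < b' := by
        rcases lt_or_gt_of_ne hca with h | h
        · exact ⟨c, a, hcσ, ha, hca, hca1, hcinj, hainj, h⟩
        · exact ⟨a, c, ha, hcσ, fun e => hca e.symm, hca1.symm, hainj, hcinj, h⟩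
      have hacard : ((σ.1.erase a').image Sigma.fst).card = q := by
        have h5 := σ.2.2
        rw [Finset.card_image_of_injOn hainj', Finset.card_erase_of_mem ha']
        omega
      have himg : (σ.1.erase b').image Sigma.fst = (σ.1.erase a').image Sigma.fst := by
        ext u
        simp only [Finset.mem_image, Finset.mem_erase]
        constructor
        · rintro ⟨z, ⟨hzb, hz⟩, rfl⟩
          rcases eq_or_ne z a' with rfl | hza
          · exact ⟨b', ⟨fun h => hne' h.symm, hb'⟩, hfst'.symm⟩
          · exact ⟨z, ⟨hza, hz⟩, rfl⟩
        · rintro ⟨z, ⟨hza, hz⟩, rfl⟩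
          rcases eq_or_ne z b' with rfl | hzb
          · exact ⟨a', ⟨hne', ha'⟩, hfst'⟩
          · exact ⟨z, ⟨hzb, hz⟩, rfl⟩
      have hkey : (σ.1.filter (fun y => y < b')).card =
          (σ.1.filter (fun y => y < a')).card + 1 := by
        have hfe : σ.1.filter (fun y => y < b') = insert a' (σ.1.filter (fun y => y < a')) := by
          ext d
          simp only [Finset.mem_filter, Finset.mem_insert]
          constructor
          · rintro ⟨hd, hdb⟩
            rcases eq_or_ne d a' with rfl | hda
            · exact Or.inl rfl
            · refine Or.inr ⟨hd, ?_⟩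
              rcases lt_or_ge d a' with h | h
              · exact h
              · exfalso
                have hda' : a' < d := lt_of_le_of_ne h (fun e => hda e.symm)
                have h1 : a'.1 ≤ d.1 := sig_fst_le_of_lt hda'
                have h2 : d.1 ≤ b'.1 := sig_fst_le_of_lt hdb
                have h3 : d.1 = b'.1 := le_antisymm h2 (hfst' ▸ h1)
                have : d = b' := hainj' (Finset.mem_coe.mpr (Finset.mem_erase.mpr ⟨hda, hd⟩))
                  (Finset.mem_coe.mpr (Finset.mem_erase.mpr ⟨fun e => (ne_of_lt hab') e.symm, hb'⟩)) h3
                exact (ne_of_lt hdb) this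
          · rintro (rfl | ⟨hd, hda⟩)
            · exact ⟨ha', hab'⟩
            · exact ⟨hd, hda.trans hab'⟩
        rw [hfe, Finset.card_insert_of_notMem (by simp)]
      symm
      rw [Finset.sum_eq_add_of_mem ⟨a', ha'⟩ ⟨b', hb'⟩ (Finset.mem_attach _ _)
        (Finset.mem_attach _ _) (by simp only [ne_eq, Subtype.ext_iff]; exact hne') ?_]
      · rw [Pmap_single_eq K Λ _ ((σ.1.erase a').image Sigma.fst)
          (Λ.pi_mem_faces ((Λ.expand α).down_closed σ.2.1 (Finset.erase_subset _ _)))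
          hacard rfl,
          Pmap_single_eq K Λ _ ((σ.1.erase a').image Sigma.fst)
          (Λ.pi_mem_faces ((Λ.expand α).down_closed σ.2.1 (Finset.erase_subset _ _)))
          hacard himg]
        rw [hkey, pow_succ, mul_neg_one, neg_smul]
        exact add_neg_cancel _
      · intro d _ hd
        obtain ⟨hd1, hd2⟩ := hd
        have hd1' : d.1 ≠ a' := fun h => hd1 (Subtype.ext h)
        have hd2' : d.1 ≠ b' := fun h => hd2 (Subtype.ext h)
        rw [Pmap_single_neg, smul_zero]
        intro hcard
        have : Set.InjOn Sigma.fst ((σ.1.erase d.1 : Finset (Σ i, Fin (α i))) : Set (Σ i, Fin (α i))) := by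
          apply Finset.card_image_iff.mp
          have h5 := σ.2.2
          rw [hcard, Finset.card_erase_of_mem d.2]
          omega
        exact hne' (this (Finset.mem_coe.mpr (Finset.mem_erase.mpr ⟨fun e => hd1' e.symm, ha'⟩))
          (Finset.mem_coe.mpr (Finset.mem_erase.mpr ⟨fun e => hd2' e.symm, hb'⟩)) hfst')
    · push_neg at hex
      symm
      apply Finset.sum_eq_zero
      intro x _
      rw [Pmap_single_neg, smul_zero]
      intro hcard
      refine hex x.1 x.2 ?_
      apply Finset.card_image_iff.mp
      have h5 := σ.2.2
      rw [hcard, Finset.card_erase_of_mem x.2]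
      omega

end ChainP
section Transfer

open AbstractComplex

variable (K : Type*) [Field K] {V : Type*} [LinearOrder V] [Fintype V] {α : V → ℕ}

lemma RHTriv_of_expand (hα : ∀ i, 1 ≤ α i) (Λ : AbstractComplex V) (i : ℤ)
    (hE : (Λ.expand α).RHTriv K i) : Λ.RHTriv K i := by
  cases i with
  | ofNat q =>
    have hE' : LinearMap.ker ((Λ.expand α).boundary K q) ≤
        LinearMap.range ((Λ.expand α).boundary K (q+1)) := hE
    show LinearMap.ker (Λ.boundary K q) ≤ LinearMap.range (Λ.boundary K (q + 1))
    intro c hc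
    have h1 : Imap K hα Λ (q+1) c ∈ LinearMap.ker ((Λ.expand α).boundary K q) := by
      rw [LinearMap.mem_ker]
      have h := LinearMap.congr_fun (boundary_comp_Imap K hα Λ q) c
      simp only [LinearMap.comp_apply] at h
      rw [h, LinearMap.mem_ker.mp hc, map_zero]
    obtain ⟨d, hd⟩ := hE' h1
    refine ⟨Pmap K Λ (q+2) d, ?_⟩
    have h2 := LinearMap.congr_fun (boundary_comp_Pmap K Λ (q+1)) d
    simp only [LinearMap.comp_apply] at h2
    have h3 := LinearMap.congr_fun (Pmap_comp_Imap K hα Λ (q+1)) c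
    simp only [LinearMap.comp_apply, LinearMap.id_apply] at h3
    rw [h2, hd, h3]
  | negSucc n =>
    cases n with
    | zero =>
      have hE' : ⊤ ≤ LinearMap.range ((Λ.expand α).boundary K 0) := hE
      show ⊤ ≤ LinearMap.range (Λ.boundary K 0)
      intro c _
      obtain ⟨d, hd⟩ := hE' (Submodule.mem_top (x := Imap K hα Λ 0 c))
      refine ⟨Pmap K Λ 1 d, ?_⟩
      have h2 := LinearMap.congr_fun (boundary_comp_Pmap K Λ 0) d
      simp only [LinearMap.comp_apply] at h2
      have h3 := LinearMap.congr_fun (Pmap_comp_Imap K hα Λ 0) c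
      simp only [LinearMap.comp_apply, LinearMap.id_apply] at h3
      rw [h2, hd, h3]
    | succ m => exact trivial

lemma link_expand (Δ : AbstractComplex V) (hα : ∀ i, 1 ≤ α i) {F : Finset V}
    (hF : F ∈ Δ.faces) :
    (Δ.expand α).link (expandSet α F) = (Δ.link F).expand α := by
  apply AbstractComplex.ext'
  ext σ
  show (σ ∩ expandSet α F = ∅ ∧ σ ∪ expandSet α F ∈ (Δ.expand α).faces) ↔
    σ ∈ ((Δ.link F).expand α).faces
  constructor
  · rintro ⟨hdisj, G, hG, hsub⟩
    have hFG : F ⊆ G := by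
      intro x hx
      have : ι0 hα x ∈ expandSet α G :=
        hsub (Finset.mem_union_right _ (mem_expandSet.mpr hx))
      exact mem_expandSet.mp this
    refine ⟨G \ F, ?_, ?_⟩
    · -- G \ F is a facet of the link
      constructor
      · refine ⟨Finset.sdiff_inter_self _ _, ?_⟩
        rw [Finset.sdiff_union_self_eq_union, Finset.union_eq_left.mpr hFG]
        exact hG.1
      · rintro t ⟨htF, htf⟩ hGt
        have hG' : G = t ∪ F := by
          refine hG.2 (t ∪ F) htf ?_
          intro x hx
          rcases Finset.mem_union.mp (Finset.mem_union_left F hx) with h | h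
          · by_cases hxF : x ∈ F
            · exact Finset.mem_union_right _ hxF
            · exact Finset.mem_union_left _ (hGt (Finset.mem_sdiff.mpr ⟨hx, hxF⟩))
          · exact Finset.mem_union_right _ h
        apply Finset.Subset.antisymm hGt
        intro x hx
        refine Finset.mem_sdiff.mpr ⟨?_, ?_⟩
        · rw [hG']; exact Finset.mem_union_left _ hx
        · intro hxF
          have : x ∈ t ∩ F := Finset.mem_inter.mpr ⟨hx, hxF⟩
          rw [htF] at this
          exact absurd this (Finset.notMem_empty x)
    · intro x hx
      have hxG : x.1 ∈ G := mem_expandSet.mp (hsub (Finset.mem_union_left _ hx))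
      refine mem_expandSet.mpr (Finset.mem_sdiff.mpr ⟨hxG, fun hxF => ?_⟩)
      have : x ∈ σ ∩ expandSet α F :=
        Finset.mem_inter.mpr ⟨hx, mem_expandSet.mpr hxF⟩
      rw [hdisj] at this
      exact absurd this (Finset.notMem_empty x)
  · rintro ⟨H, hH, hsub⟩
    obtain ⟨hHF, hHFf⟩ := hH.1
    obtain ⟨G, hG, hHFG⟩ := Δ.exists_facet hHFf
    constructor
    · rw [Finset.eq_empty_iff_forall_notMem]
      intro x hx
      obtain ⟨hxσ, hxF⟩ := Finset.mem_inter.mp hx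
      have hxH : x.1 ∈ H := mem_expandSet.mp (hsub hxσ)
      have : x.1 ∈ H ∩ F := Finset.mem_inter.mpr ⟨hxH, mem_expandSet.mp hxF⟩
      rw [hHF] at this
      exact absurd this (Finset.notMem_empty _)
    · refine ⟨G, hG, ?_⟩
      intro x hx
      rcases Finset.mem_union.mp hx with h | h
      · exact mem_expandSet.mpr (hHFG (Finset.mem_union_left _ (mem_expandSet.mp (hsub h))))
      · exact mem_expandSet.mpr (hHFG (Finset.mem_union_right _ (mem_expandSet.mp h)))

end Transfer
/-- if `Δ^α` is Cohen–Macaulay over `K`, then so is `Δ`. -/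
theorem cm_of_expand_cm (K : Type*) [Field K] {V : Type*} [Fintype V] [LinearOrder V]
    (Δ : AbstractComplex V) (α : V → ℕ) (hα : ∀ i, 1 ≤ α i)
    (h : AbstractComplex.IsCM K (Δ.expand α)) :
    AbstractComplex.IsCM K Δ := by
  intro F hF i hdim
  obtain ⟨G, hG, hFG⟩ := Δ.exists_facet hF
  have hEF : expandSet α F ∈ (Δ.expand α).faces := ⟨G, hG, expandSet_mono hFG⟩
  have hlink := link_expand Δ hα hF
  have hdim' : ((Δ.link F).expand α).dimLT i := by
    obtain ⟨s, hs, hcard⟩ := hdim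
    exact ⟨s.image (ι0 hα), (Δ.link F).iF_mem_faces hα hs,
      by rw [AbstractComplex.card_iF hα]; exact hcard⟩
  have hR := h _ hEF i (by rw [hlink]; exact hdim')
  rw [hlink] at hR
  exact RHTriv_of_expand K hα (Δ.link F) i hR
end

section
/- Let Δ be a ${\rm CM}_t$ simplicial complex for some t ≥ 0, with contraction Γ by α = (k_1,…,k_n). If k_i ≥ t for all i and Γ is pure, then Γ is Buchsbaum (i.e., ${\rm CM}_1$). -/
open Finset

set_option linter.unusedSectionVars false
section InvAux

variable {V : Type*} [LinearOrder V] {Q : Type*} [LinearOrder Q]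

/-- Number of inversions of `f` on `σ`. -/
def inv2 (f : V → Q) (σ : Finset V) : ℕ :=
  ∑ x ∈ σ, (σ.filter fun y => x < y ∧ f y < f x).card

lemma filter_erase_of_not {σ : Finset V} {P : V → Prop} [DecidablePred P] {a : V}
    (h : ¬ P a) : σ.filter P = (σ.erase a).filter P := by
  ext y
  simp only [mem_filter, mem_erase]
  constructor
  · rintro ⟨hy, hP⟩
    refine ⟨⟨?_, hy⟩, hP⟩
    rintro rfl; exact h hP
  · rintro ⟨⟨_, hy⟩, hP⟩; exact ⟨hy, hP⟩

lemma inv2_erase (f : V → Q) {σ : Finset V} {a : V} (ha : a ∈ σ) :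
    inv2 f σ = inv2 f (σ.erase a)
      + ((σ.erase a).filter fun y => y < a ∧ f a < f y).card
      + ((σ.erase a).filter fun y => a < y ∧ f y < f a).card := by
  have hsplit : inv2 f σ = (∑ x ∈ σ.erase a, (σ.filter fun y => x < y ∧ f y < f x).card)
      + (σ.filter fun y => a < y ∧ f y < f a).card := by
    rw [inv2, ← Finset.sum_erase_add _ _ ha]
  have h2 : (σ.filter fun y => a < y ∧ f y < f a).card
      = ((σ.erase a).filter fun y => a < y ∧ f y < f a).card := by
    rw [filter_erase_of_not (a := a) (by simp)]
  have h3 : ∀ x ∈ σ.erase a, (σ.filter fun y => x < y ∧ f y < f x).card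
      = ((σ.erase a).filter fun y => x < y ∧ f y < f x).card
        + (if x < a ∧ f a < f x then 1 else 0) := by
    intro x hx
    conv_lhs => rw [← Finset.insert_erase ha]
    rw [Finset.filter_insert]
    split_ifs with h
    · rw [Finset.card_insert_of_notMem (by simp)]
    · rw [add_zero]
  rw [hsplit, Finset.sum_congr rfl h3, Finset.sum_add_distrib, h2, ← Finset.card_filter]
  rw [inv2]

lemma card_filter_image {σ : Finset V} {f : V → Q} (hinj : Set.InjOn f σ) (x : V) :
    ((σ.image f).filter (· < f x)).card = (σ.filter fun y => f y < f x).card := by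
  rw [Finset.filter_image]
  exact Finset.card_image_of_injOn (hinj.mono (Finset.filter_subset _ _))

lemma signA {f : V → Q} {σ : Finset V} (hinj : Set.InjOn f σ) {x : V} (hx : x ∈ σ) :
    Even ((σ.filter (· < x)).card + ((σ.image f).filter (· < f x)).card
      + inv2 f σ + inv2 f (σ.erase x)) := by
  have e1 : (σ.filter (· < x)).card = ((σ.erase x).filter (· < x)).card := by
    rw [filter_erase_of_not (a := x) (by simp)]
  have e2 : ((σ.image f).filter (· < f x)).card
      = ((σ.erase x).filter fun y => f y < f x).card := by
    rw [card_filter_image hinj, filter_erase_of_not (a := x) (by simp)]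
  rw [e1, e2, inv2_erase f hx]
  have : ∀ n m k l j : ℕ, Even (n + m + k + l) → Even (n + m + (j + k + l) + j) := by
    intro n m k l j h
    obtain ⟨c, hc⟩ := h
    exact ⟨c + j, by omega⟩
  apply this
  rw [Finset.card_filter, Finset.card_filter, Finset.card_filter, Finset.card_filter,
    ← Finset.sum_add_distrib, ← Finset.sum_add_distrib, ← Finset.sum_add_distrib]
  apply Finset.even_sum
  intro y hy
  have hyx : y ≠ x := (Finset.mem_erase.mp hy).1
  have hymem : y ∈ σ := (Finset.mem_erase.mp hy).2
  have hfyx : f y ≠ f x := fun h => hyx (hinj hymem hx h)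
  by_cases h1 : y < x <;> by_cases h2 : f y < f x
  · have h1' : ¬ x < y := asymm h1
    have h2' : ¬ f x < f y := asymm h2
    simp [h1, h2, h1', h2']
  · have h1' : ¬ x < y := asymm h1
    have h2' : f x < f y := lt_of_le_of_ne (not_lt.mp h2) (Ne.symm hfyx)
    simp [h1, h2, h1', h2']
  · have h1' : x < y := lt_of_le_of_ne (not_lt.mp h1) (Ne.symm hyx)
    have h2' : ¬ f x < f y := asymm h2
    simp [h1, h2, h1', h2']
  · have h1' : x < y := lt_of_le_of_ne (not_lt.mp h1) (Ne.symm hyx)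
    have h2' : f x < f y := lt_of_le_of_ne (not_lt.mp h2) (Ne.symm hfyx)
    simp [h1, h2, h1', h2']

lemma signB {f : V → Q} {σ : Finset V} {a b : V} (ha : a ∈ σ) (hb : b ∈ σ) (hab : a < b)
    (hfab : f a = f b) (hinja : Set.InjOn f ↑(σ.erase a)) :
    Odd ((σ.filter (· < a)).card + inv2 f (σ.erase a)
      + ((σ.filter (· < b)).card + inv2 f (σ.erase b))) := by
  have hne : a ≠ b := ne_of_lt hab
  have hbea : b ∈ σ.erase a := Finset.mem_erase.mpr ⟨hne.symm, hb⟩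
  have haeb : a ∈ σ.erase b := Finset.mem_erase.mpr ⟨hne, ha⟩
  set s : Finset V := (σ.erase a).erase b with hs
  have hs' : (σ.erase b).erase a = s := Finset.erase_right_comm
  -- inversions
  have i1 : inv2 f (σ.erase a) = inv2 f s
      + (s.filter fun y => y < b ∧ f b < f y).card
      + (s.filter fun y => b < y ∧ f y < f b).card := inv2_erase f hbea
  have i2 : inv2 f (σ.erase b) = inv2 f s
      + (s.filter fun y => y < a ∧ f a < f y).card
      + (s.filter fun y => a < y ∧ f y < f a).card := by
    rw [← hs'] at *
    exact inv2_erase f haeb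
  -- position counts
  have p1 : (σ.filter (· < a)).card = (s.filter (· < a)).card := by
    rw [filter_erase_of_not (a := a) (σ := σ) (by simp),
      filter_erase_of_not (a := b) (by simp [asymm hab])]
  have p2 : (σ.filter (· < b)).card = (s.filter (· < b)).card + 1 := by
    rw [filter_erase_of_not (a := b) (σ := σ) (by simp)]
    have : σ.erase b = insert a s := by
      rw [← hs']; exact (Finset.insert_erase haeb).symm
    rw [this, Finset.filter_insert, if_pos hab,
      Finset.card_insert_of_notMem (by simp [hs])]
  rw [i1, i2, p1, p2]
  have key : Even ((s.filter (· < a)).card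
      + (s.filter fun y => y < b ∧ f b < f y).card
      + (s.filter fun y => b < y ∧ f y < f b).card
      + (s.filter (· < b)).card
      + (s.filter fun y => y < a ∧ f a < f y).card
      + (s.filter fun y => a < y ∧ f y < f a).card) := by
    rw [Finset.card_filter, Finset.card_filter, Finset.card_filter, Finset.card_filter,
      Finset.card_filter, Finset.card_filter, ← Finset.sum_add_distrib,
      ← Finset.sum_add_distrib, ← Finset.sum_add_distrib, ← Finset.sum_add_distrib,
      ← Finset.sum_add_distrib]
    apply Finset.even_sum
    intro y hy
    have hyb : y ≠ b := (Finset.mem_erase.mp hy).1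
    have hya : y ≠ a := (Finset.mem_erase.mp (Finset.mem_erase.mp hy).2).1
    have hymem : y ∈ σ.erase a := (Finset.mem_erase.mp hy).2
    have hfyb : f y ≠ f b := fun h => hyb (hinja hymem hbea h)
    have hfya : f y ≠ f a := by rw [hfab]; exact hfyb
    have hb' : (b < y) ↔ ¬ y < b := ⟨fun h => asymm h, fun h => lt_of_le_of_ne (not_lt.mp h) (Ne.symm hyb)⟩
    have ha' : (a < y) ↔ ¬ y < a := ⟨fun h => asymm h, fun h => lt_of_le_of_ne (not_lt.mp h) (Ne.symm hya)⟩
    have hfb' : (f b < f y) ↔ ¬ f y < f a := by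
      rw [← hfab]
      exact ⟨fun h => asymm h, fun h => lt_of_le_of_ne (not_lt.mp h) (Ne.symm hfya)⟩
    have hfa' : (f a < f y) ↔ ¬ f y < f a :=
      ⟨fun h => asymm h, fun h => lt_of_le_of_ne (not_lt.mp h) (Ne.symm hfya)⟩
    have hfyb' : (f y < f b) ↔ f y < f a := by rw [← hfab]
    simp only [hb', ha', hfb', hfa', hfyb']
    by_cases hp : y < a <;> by_cases hq : y < b <;> by_cases hr : f y < f a
    all_goals first
      | (exfalso; exact hq (hp.trans hab))
      | ((simp [hp, hq, hr]) <;> decide)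
  obtain ⟨c, hc⟩ := key
  exact ⟨c + inv2 f s, by omega⟩

end InvAux

section ChainMap

variable {V : Type*} [LinearOrder V] {Q : Type*} [LinearOrder Q]
variable (K : Type*) [Field K]

open AbstractComplex in
/-- The chain map induced by a vertex map `f` carrying faces of `A` to faces of `B`. -/
noncomputable def cmap (A : AbstractComplex V) (B : AbstractComplex Q) (f : V → Q)
    (hf : ∀ σ ∈ A.faces, σ.image f ∈ B.faces) (q : ℕ) :
    (A.Face q →₀ K) →ₗ[K] (B.Face q →₀ K) :=
  Finsupp.lsum K fun σ => LinearMap.toSpanSingleton K _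
    (if h : (σ.1.image f).card = q then
       ((-1 : K) ^ inv2 f σ.1) • Finsupp.single (⟨σ.1.image f, hf _ σ.2.1, h⟩ : B.Face q) 1
     else 0)

lemma cmap_single {A : AbstractComplex V} {B : AbstractComplex Q} {f : V → Q}
    {hf : ∀ σ ∈ A.faces, σ.image f ∈ B.faces} {q : ℕ} (σ : A.Face q) :
    cmap K A B f hf q (Finsupp.single σ 1) =
      (if h : (σ.1.image f).card = q then
        ((-1 : K) ^ inv2 f σ.1) • Finsupp.single (⟨σ.1.image f, hf _ σ.2.1, h⟩ : B.Face q) 1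
      else 0) := by
  rw [cmap, Finsupp.lsum_single, LinearMap.toSpanSingleton_apply, one_smul]

lemma boundary_single_s13 {A : AbstractComplex V} {q : ℕ} (σ : A.Face (q + 1)) :
    A.boundary K q (Finsupp.single σ 1) =
      ∑ x ∈ σ.1.attach,
        ((-1 : K) ^ (σ.1.filter (fun y => y < x.1)).card) •
          Finsupp.single (⟨σ.1.erase x.1, A.down_closed σ.2.1 (Finset.erase_subset _ _), by
            rw [Finset.card_erase_of_mem x.2, σ.2.2]; omega⟩ : A.Face q) (1 : K) := by
  rw [AbstractComplex.boundary, Finsupp.lsum_single, LinearMap.toSpanSingleton_apply, one_smul]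

lemma image_erase_injOn {f : V → Q} {σ : Finset V} (hinj : Set.InjOn f ↑σ) {x : V}
    (hx : x ∈ σ) : (σ.erase x).image f = (σ.image f).erase (f x) := by
  ext y
  simp only [Finset.mem_image, Finset.mem_erase]
  constructor
  · rintro ⟨z, ⟨hzx, hz⟩, rfl⟩
    exact ⟨fun h => hzx (hinj hz hx h), z, hz, rfl⟩
  · rintro ⟨hy, z, hz, rfl⟩
    exact ⟨z, ⟨fun h => hy (by rw [h]), hz⟩, rfl⟩

lemma image_erase_pair {f : V → Q} {σ : Finset V} {a b : V} (ha : a ∈ σ) (hb : b ∈ σ)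
    (hfab : f a = f b) : (σ.erase a).image f = (σ.erase b).image f := by
  ext y
  simp only [Finset.mem_image, Finset.mem_erase]
  constructor
  · rintro ⟨z, ⟨hza, hz⟩, rfl⟩
    by_cases hzb : z = b
    · subst hzb
      exact ⟨a, ⟨Ne.symm hza, ha⟩, hfab⟩
    · exact ⟨z, ⟨hzb, hz⟩, rfl⟩
  · rintro ⟨z, ⟨hzb, hz⟩, rfl⟩
    by_cases hza : z = a
    · subst hza
      exact ⟨b, ⟨Ne.symm hzb, hb⟩, hfab.symm⟩
    · exact ⟨z, ⟨hza, hz⟩, rfl⟩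

lemma injOn_erase_swap {f : V → Q} {σ : Finset V} {x₀ p : V}
    (hinj : Set.InjOn f ↑(σ.erase x₀)) (hx₀ : x₀ ∈ σ) (hp : p ∈ σ) (hne : p ≠ x₀)
    (hfp : f p = f x₀) : Set.InjOn f ↑(σ.erase p) := by
  intro y hy z hz hyz
  simp only [Finset.coe_erase, Set.mem_diff, Set.mem_singleton_iff, Finset.mem_coe] at hy hz
  by_cases hyx : y = x₀
  · by_cases hzx : z = x₀
    · rw [hyx, hzx]
    · exfalso
      have hzp : z ≠ p := hz.2
      have : z = p := by
        have h1 : p ∈ (σ.erase x₀ : Finset V) := Finset.mem_erase.mpr ⟨hne, hp⟩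
        have h2 : z ∈ (σ.erase x₀ : Finset V) := Finset.mem_erase.mpr ⟨hzx, hz.1⟩
        exact (hinj h2 h1 (by rw [← hyz, hyx, ← hfp])).symm ▸ rfl
      exact hzp this
  · by_cases hzx : z = x₀
    · exfalso
      have hyp : y ≠ p := hy.2
      have h1 : p ∈ (σ.erase x₀ : Finset V) := Finset.mem_erase.mpr ⟨hne, hp⟩
      have h2 : y ∈ (σ.erase x₀ : Finset V) := Finset.mem_erase.mpr ⟨hyx, hy.1⟩
      exact hyp (hinj h2 h1 (by rw [hyz, hzx, ← hfp]))
    · exact hinj (Finset.mem_erase.mpr ⟨hyx, hy.1⟩) (Finset.mem_erase.mpr ⟨hzx, hz.1⟩) hyz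

lemma neg_one_pow_mul_eq {K : Type*} [Field K] {a b c d : ℕ} (h : Even (a + b + c + d)) :
    ((-1 : K) ^ a) * ((-1 : K) ^ d) = ((-1 : K) ^ c) * ((-1 : K) ^ b) := by
  rw [← pow_add, ← pow_add, neg_one_pow_eq_pow_mod_two, neg_one_pow_eq_pow_mod_two (n := c + b)]
  congr 1
  rw [Nat.even_iff] at h
  omega

lemma neg_one_pow_mul_cancel {K : Type*} [Field K] {a b c d : ℕ} (h : Odd (a + b + (c + d))) :
    ((-1 : K) ^ a) * ((-1 : K) ^ b) + ((-1 : K) ^ c) * ((-1 : K) ^ d) = 0 := by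
  rw [← pow_add, ← pow_add, neg_one_pow_eq_pow_mod_two, neg_one_pow_eq_pow_mod_two (n := c + d)]
  rw [Nat.odd_iff] at h
  have : (a + b) % 2 = 0 ∧ (c + d) % 2 = 1 ∨ (a + b) % 2 = 1 ∧ (c + d) % 2 = 0 := by omega
  rcases this with ⟨h1, h2⟩ | ⟨h1, h2⟩ <;> rw [h1, h2] <;> ring

theorem cmap_comm (A : AbstractComplex V) (B : AbstractComplex Q) (f : V → Q)
    (hf : ∀ σ ∈ A.faces, σ.image f ∈ B.faces) (q : ℕ) :
    (cmap K A B f hf q).comp (A.boundary K q)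
      = (B.boundary K q).comp (cmap K A B f hf (q + 1)) := by
  suffices key : ∀ σ : A.Face (q + 1),
      cmap K A B f hf q (A.boundary K q (Finsupp.single σ 1))
        = B.boundary K q (cmap K A B f hf (q + 1) (Finsupp.single σ 1)) by
    apply Finsupp.lhom_ext
    intro σ b
    have hb : (Finsupp.single σ b) = b • Finsupp.single σ (1 : K) := by
      rw [Finsupp.smul_single, smul_eq_mul, mul_one]
    simp only [LinearMap.comp_apply, hb, map_smul, key σ]
  intro σ
  have hFA : σ.1 ∈ A.faces := σ.2.1
  have hFc : σ.1.card = q + 1 := σ.2.2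
  set F := σ.1 with hFdef
  have hErase : ∀ x, (F.erase x) ∈ A.faces := fun x => A.down_closed hFA (Finset.erase_subset _ _)
  set g : V → (B.Face q →₀ K) := fun x =>
    if hx : x ∈ F then
      ((-1 : K) ^ (F.filter (fun y => y < x)).card) •
        (if h : ((F.erase x).image f).card = q then
          ((-1 : K) ^ inv2 f (F.erase x)) •
            Finsupp.single (⟨(F.erase x).image f, hf _ (hErase x), h⟩ : B.Face q) 1
        else 0)
    else 0 with hgdef
  have hL : cmap K A B f hf q (A.boundary K q (Finsupp.single σ 1)) = ∑ x ∈ F, g x := by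
    rw [boundary_single_s13, map_sum, ← Finset.sum_attach F g]
    apply Finset.sum_congr rfl
    intro x _
    rw [map_smul, cmap_single]
    rw [hgdef]
    simp only [dif_pos (show (x : V) ∈ F from x.2)]
    rfl
  rw [hL, cmap_single]
  by_cases hinj : (F.image f).card = q + 1
  · -- injective case
    have hinjOn : Set.InjOn f ↑F := Finset.card_image_iff.mp (by rw [hinj, hFc])
    rw [dif_pos hinj, map_smul, boundary_single_s13]
    set τF : Finset Q := F.image f with hτF
    have hccc : ∀ c ∈ τF, (τF.erase c) ∈ B.faces :=
      fun c _ => B.down_closed (hf _ hFA) (Finset.erase_subset _ _)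
    set h : Q → (B.Face q →₀ K) := fun c =>
      if hc : c ∈ τF then
        ((-1 : K) ^ (τF.filter (fun y => y < c)).card) •
          Finsupp.single (⟨τF.erase c, hccc c hc, by
            rw [Finset.card_erase_of_mem hc, hinj]; omega⟩ : B.Face q) 1
      else 0 with hhdef
    have hR : ∑ c ∈ τF.attach,
        ((-1 : K) ^ (τF.filter (fun y => y < c.1)).card) •
          Finsupp.single (⟨τF.erase c.1, B.down_closed (hf F hFA) (Finset.erase_subset _ _), by
            rw [Finset.card_erase_of_mem c.2, hinj]; omega⟩ : B.Face q) (1 : K) = ∑ c ∈ τF, h c := by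
      rw [← Finset.sum_attach τF h]
      apply Finset.sum_congr rfl
      intro c _
      rw [hhdef]
      simp only [dif_pos c.2]
    rw [hR, Finset.sum_image (fun x hx y hy hxy => hinjOn hx hy hxy), Finset.smul_sum]
    apply Finset.sum_congr rfl
    intro x hx
    have hfx : f x ∈ τF := Finset.mem_image_of_mem f hx
    have hcard : ((F.erase x).image f).card = q := by
      rw [Finset.card_image_of_injOn (hinjOn.mono (by
        simp only [Finset.coe_erase]; exact Set.diff_subset)),
        Finset.card_erase_of_mem hx, hFc]
      omega
    rw [hgdef, hhdef]
    simp only [dif_pos hx, dif_pos hcard, dif_pos hfx]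
    have hfaceeq : (⟨(F.erase x).image f, hf _ (hErase x), hcard⟩ : B.Face q)
        = ⟨τF.erase (f x), hccc _ hfx, by rw [Finset.card_erase_of_mem hfx, hinj]; omega⟩ :=
      Subtype.ext (image_erase_injOn hinjOn hx)
    rw [hfaceeq, smul_smul, smul_smul]
    congr 1
    exact neg_one_pow_mul_eq (signA hinjOn hx)
  · -- non-injective case
    rw [dif_neg hinj, map_zero]
    by_cases hex : ∃ x ∈ F, Set.InjOn f ↑(F.erase x)
    · obtain ⟨x₀, hx₀, hinj₀⟩ := hex
      have hFnot : ¬ Set.InjOn f ↑F := fun h =>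
        hinj (by rw [Finset.card_image_of_injOn h, hFc])
      rw [Set.InjOn] at hFnot
      push_neg at hFnot
      obtain ⟨a, ha, b, hb, hfeq, hne⟩ := hFnot
      rw [Finset.mem_coe] at ha hb
      -- find the partner p of x₀
      have hpair : ∃ p ∈ F, p ≠ x₀ ∧ f p = f x₀ := by
        by_cases hax : a = x₀
        · subst hax
          exact ⟨b, hb, fun h => hne h.symm, hfeq.symm⟩
        · by_cases hbx : b = x₀
          · subst hbx
            exact ⟨a, ha, hax, hfeq⟩
          · exfalso
            exact hne (hinj₀ (Finset.mem_coe.mpr (Finset.mem_erase.mpr ⟨hax, ha⟩))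
              (Finset.mem_coe.mpr (Finset.mem_erase.mpr ⟨hbx, hb⟩)) hfeq)
      obtain ⟨p, hp, hpne, hfp⟩ := hpair
      have hinjp : Set.InjOn f ↑(F.erase p) := injOn_erase_swap hinj₀ hx₀ hp hpne hfp
      -- order the pair
      obtain ⟨u, v, hu, hv, huv, hfuv, hinju, hinjv⟩ :
          ∃ u v, u ∈ F ∧ v ∈ F ∧ u < v ∧ f u = f v ∧
            Set.InjOn f ↑(F.erase u) ∧ Set.InjOn f ↑(F.erase v) := by
        rcases lt_or_gt_of_ne hpne with h | h
        · exact ⟨p, x₀, hp, hx₀, h, hfp, hinjp, hinj₀⟩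
        · exact ⟨x₀, p, hx₀, hp, h, hfp.symm, hinj₀, hinjp⟩
      have hzero : ∀ x ∈ F, x ∉ ({u, v} : Finset V) → g x = 0 := by
        intro x hxF hxuv
        simp only [Finset.mem_insert, Finset.mem_singleton, not_or] at hxuv
        rw [hgdef]
        simp only [dif_pos hxF]
        have : ¬ ((F.erase x).image f).card = q := by
          intro hq
          have hinjx : Set.InjOn f ↑(F.erase x) := by
            apply Finset.card_image_iff.mp
            rw [hq, Finset.card_erase_of_mem hxF, hFc]
            omega
          exact (ne_of_lt huv) (hinjx
            (Finset.mem_coe.mpr (Finset.mem_erase.mpr ⟨fun h => hxuv.1 h.symm, hu⟩))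
            (Finset.mem_coe.mpr (Finset.mem_erase.mpr ⟨fun h => hxuv.2 h.symm, hv⟩)) hfuv)
        rw [dif_neg this, smul_zero]
      have hsub : ({u, v} : Finset V) ⊆ F := by
        intro x hx
        simp only [Finset.mem_insert, Finset.mem_singleton] at hx
        rcases hx with rfl | rfl
        · exact hu
        · exact hv
      rw [← Finset.sum_subset hsub hzero, Finset.sum_pair (ne_of_lt huv)]
      have hcardu : ((F.erase u).image f).card = q := by
        rw [Finset.card_image_of_injOn hinju, Finset.card_erase_of_mem hu, hFc]
        omega
      have hcardv : ((F.erase v).image f).card = q := by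
        rw [Finset.card_image_of_injOn hinjv, Finset.card_erase_of_mem hv, hFc]
        omega
      rw [hgdef]
      simp only [dif_pos hu, dif_pos hv, dif_pos hcardu, dif_pos hcardv]
      have hfaceeq : (⟨(F.erase u).image f, hf _ (hErase u), hcardu⟩ : B.Face q)
          = ⟨(F.erase v).image f, hf _ (hErase v), hcardv⟩ :=
        Subtype.ext (image_erase_pair hu hv hfuv)
      rw [hfaceeq, smul_smul, smul_smul, ← add_smul]
      have : ((-1 : K) ^ (F.filter (fun y => y < u)).card) * ((-1 : K) ^ inv2 f (F.erase u))
          + ((-1 : K) ^ (F.filter (fun y => y < v)).card) * ((-1 : K) ^ inv2 f (F.erase v))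
          = 0 := neg_one_pow_mul_cancel (signB hu hv huv hfuv hinju)
      rw [this, zero_smul]
    · push_neg at hex
      apply Finset.sum_eq_zero
      intro x hx
      rw [hgdef]
      simp only [dif_pos hx]
      have : ¬ ((F.erase x).image f).card = q := by
        intro hq
        exact hex x hx (Finset.card_image_iff.mp (by
          rw [hq, Finset.card_erase_of_mem hx, hFc]
          omega))
      rw [dif_neg this, smul_zero]

end ChainMap

namespace AbstractComplex

variable {V : Type*}

/-- Two vertices are equivalent iff they lie in exactly the same facets. -/
def contractSetoid (Δ : AbstractComplex V) : Setoid V where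
  r x y := ∀ F : Finset V, Δ.IsFacet F → (x ∈ F ↔ y ∈ F)
  iseqv := ⟨fun _ _ _ => Iff.rfl, fun h F hF => (h F hF).symm,
    fun h1 h2 F hF => (h1 F hF).trans (h2 F hF)⟩

/-- The contraction of `Δ`: the complex on the equivalence classes of vertices,
whose facets are the images of the facets of `Δ`. -/
def contraction (Δ : AbstractComplex V) : AbstractComplex (Quotient Δ.contractSetoid) where
  faces := {σ | ∃ F : Finset V, Δ.IsFacet F ∧
    ∀ y ∈ σ, ∃ x ∈ F, Quotient.mk Δ.contractSetoid x = y}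
  down_closed := fun ⟨F, hF, h⟩ hts => ⟨F, hF, fun y hy => h y (hts hy)⟩

/-- The size of an equivalence class of vertices: the components of the vector
obtained from contraction. -/
noncomputable def classSize (Δ : AbstractComplex V) (y : Quotient Δ.contractSetoid) : ℕ :=
  Nat.card {x : V // Quotient.mk Δ.contractSetoid x = y}

end AbstractComplex

noncomputable instance quotLinearOrder {V : Type*} [LinearOrder V] {s : Setoid V} :
    LinearOrder (Quotient s) :=
  LinearOrder.lift' Quotient.out Quotient.out_injective


section Helpers

lemma AbstractComplex.ext'_s13 {V : Type*} {A B : AbstractComplex V} (h : A.faces = B.faces) :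
    A = B := by
  cases A; cases B; simpa using h

lemma AbstractComplex.link_empty {V : Type*} [DecidableEq V] (A : AbstractComplex V) :
    A.link ∅ = A := by
  apply AbstractComplex.ext'_s13
  ext s
  simp [AbstractComplex.link]

lemma AbstractComplex.exists_facet_s13 {V : Type*} [Fintype V] [DecidableEq V]
    (Δ : AbstractComplex V) {s : Finset V} (hs : s ∈ Δ.faces) :
    ∃ F, Δ.IsFacet F ∧ s ⊆ F := by
  classical
  obtain ⟨F, hF, hmax⟩ := Finset.exists_max_image
    ((Finset.univ : Finset (Finset V)).filter fun F => F ∈ Δ.faces ∧ s ⊆ F)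
    Finset.card ⟨s, by simp [hs]⟩
  rw [Finset.mem_filter] at hF
  refine ⟨F, ⟨hF.2.1, fun u hu hFu => Finset.eq_of_subset_of_card_le hFu ?_⟩, hF.2.2⟩
  have := hmax u (Finset.mem_filter.mpr ⟨Finset.mem_univ _, hu, hF.2.2.trans hFu⟩)
  exact this

lemma inv2_eq_zero {V Q : Type*} [LinearOrder V] [LinearOrder Q] {f : V → Q} {σ : Finset V}
    (h : ∀ x ∈ σ, ∀ y ∈ σ, x < y → ¬ f y < f x) : inv2 f σ = 0 := by
  apply Finset.sum_eq_zero
  intro x hx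
  rw [Finset.card_eq_zero, Finset.filter_eq_empty_iff]
  rintro y hy ⟨h1, h2⟩
  exact h x hx y hy h1 h2

lemma out_lt_iff {V : Type*} [LinearOrder V] {s : Setoid V} {a b : Quotient s} :
    @LT.lt (Quotient s) quotLinearOrder.toLT a b ↔ a.out < b.out := ⟨fun h => h, fun h => h⟩

lemma image_out_image_mk {V : Type*} [DecidableEq V] {s : Setoid V}
    [DecidableEq (Quotient s)] (τ : Finset (Quotient s)) :
    (τ.image Quotient.out).image (Quotient.mk s) = τ := by
  rw [Finset.image_image]
  ext c
  simp only [Finset.mem_image, Function.comp_apply, Quotient.out_eq]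
  exact ⟨fun ⟨a, ha, h⟩ => h ▸ ha, fun h => ⟨c, h, rfl⟩⟩

lemma inv2_out {V : Type*} [LinearOrder V] {s : Setoid V} (τ : Finset (Quotient s)) :
    inv2 (Quotient.out (s := s)) τ = 0 :=
  inv2_eq_zero fun _ _ _ _ h1 h2 => asymm (out_lt_iff.mp h1) h2

lemma inv2_mk_image_out {V : Type*} [LinearOrder V] {s : Setoid V}
    (τ : Finset (Quotient s)) :
    inv2 (Quotient.mk s) (τ.image Quotient.out) = 0 := by
  apply inv2_eq_zero
  intro x hx y hy h1 h2
  obtain ⟨c, _, rfl⟩ := Finset.mem_image.mp hx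
  obtain ⟨d, _, rfl⟩ := Finset.mem_image.mp hy
  rw [Quotient.out_eq, Quotient.out_eq] at h2
  exact asymm (out_lt_iff.mpr h1) (out_lt_iff.mp h2)

end Helpers

/-- if `Δ` is `CM_t`, every component of the vector obtained from
contraction is at least `t`, and the contraction `Γ` is pure, then `Γ` is Buchsbaum. -/
theorem contraction_buchsbaum_of_cmt (K : Type*) [Field K] {V : Type*} [Fintype V]
    [LinearOrder V] (Δ : AbstractComplex V) (t : ℕ) (hΔ : Δ.IsCMt K t)
    (hk : ∀ y : Quotient Δ.contractSetoid, t ≤ Δ.classSize y)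
    (hpure : Δ.contraction.IsPure) :
    AbstractComplex.IsBuchsbaum K Δ.contraction := by
  refine ⟨hpure, ?_⟩
  intro G hG hGne i hdim
  -- the union of the classes appearing in G
  set W : Finset V := Finset.univ.filter
    (fun x => Quotient.mk Δ.contractSetoid x ∈ G) with hWdef
  have hWsub : ∀ {F : Finset V}, Δ.IsFacet F →
      (∀ y ∈ G, ∃ x ∈ F, Quotient.mk Δ.contractSetoid x = y) → W ⊆ F := by
    intro F hF hrep x hxW
    rw [hWdef, Finset.mem_filter] at hxW
    obtain ⟨x', hx'F, hx'⟩ := hrep _ hxW.2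
    exact ((Quotient.exact hx') F hF).mp hx'F
  obtain ⟨F₀, hF₀, hrep₀⟩ := hG
  have hW : W ∈ Δ.faces := Δ.down_closed hF₀.1 (hWsub hF₀ hrep₀)
  have hWt : t ≤ W.card := by
    obtain ⟨y₀, hy₀⟩ := Finset.nonempty_iff_ne_empty.mpr hGne
    calc t ≤ Δ.classSize y₀ := hk y₀
      _ = (Finset.univ.filter fun x => Quotient.mk Δ.contractSetoid x = y₀).card := by
          rw [AbstractComplex.classSize, Nat.card_eq_fintype_card, Fintype.card_subtype]
      _ ≤ W.card := Finset.card_le_card (by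
          intro x hx
          rw [Finset.mem_filter] at hx ⊢
          exact ⟨hx.1, hx.2 ▸ hy₀⟩)
  have hCM : AbstractComplex.IsCM K (Δ.link W) := hΔ.2 W hW hWt
  -- the two vertex maps and face conditions
  have hfs : ∀ τ ∈ (Δ.contraction.link G).faces,
      τ.image Quotient.out ∈ (Δ.link W).faces := by
    intro τ hτ
    obtain ⟨hdis, F, hF, hrep⟩ := hτ
    constructor
    · rw [Finset.eq_empty_iff_forall_notMem]
      intro x hx
      rw [Finset.mem_inter, Finset.mem_image] at hx
      obtain ⟨⟨c, hcτ, rfl⟩, hxW⟩ := hx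
      rw [hWdef, Finset.mem_filter, Quotient.out_eq] at hxW
      have : c ∈ τ ∩ G := Finset.mem_inter.mpr ⟨hcτ, hxW.2⟩
      rw [hdis] at this
      exact Finset.notMem_empty _ this
    · apply Δ.down_closed hF.1
      apply Finset.union_subset
      · intro x hx
        obtain ⟨c, hcτ, rfl⟩ := Finset.mem_image.mp hx
        obtain ⟨x', hx'F, hx'⟩ := hrep c (Finset.mem_union_left _ hcτ)
        exact ((Quotient.exact (hx'.trans (Quotient.out_eq c).symm)) F hF).mp hx'F
      · exact hWsub hF (fun y hy => hrep y (Finset.mem_union_right _ hy))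
  have hfπ : ∀ σ ∈ (Δ.link W).faces,
      σ.image (Quotient.mk Δ.contractSetoid) ∈ (Δ.contraction.link G).faces := by
    intro σ hσ
    obtain ⟨hdis, hfaces⟩ := hσ
    obtain ⟨F, hFfacet, hsub⟩ := Δ.exists_facet_s13 hfaces
    constructor
    · rw [Finset.eq_empty_iff_forall_notMem]
      intro c hc
      rw [Finset.mem_inter, Finset.mem_image] at hc
      obtain ⟨⟨x, hxσ, rfl⟩, hcG⟩ := hc
      have : x ∈ σ ∩ W := Finset.mem_inter.mpr
        ⟨hxσ, by rw [hWdef, Finset.mem_filter]; exact ⟨Finset.mem_univ _, hcG⟩⟩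
      rw [hdis] at this
      exact Finset.notMem_empty _ this
    · refine ⟨F, hFfacet, ?_⟩
      intro y hy
      rcases Finset.mem_union.mp hy with hy | hy
      · obtain ⟨x, hxσ, rfl⟩ := Finset.mem_image.mp hy
        exact ⟨x, hsub (Finset.mem_union_left _ hxσ), rfl⟩
      · refine ⟨y.out, hsub (Finset.mem_union_right _ ?_), Quotient.out_eq y⟩
        rw [hWdef, Finset.mem_filter, Quotient.out_eq]
        exact ⟨Finset.mem_univ _, hy⟩
  -- the chain maps
  let Smap := fun q => cmap K (Δ.contraction.link G) (Δ.link W) Quotient.out hfs q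
  let Pmap := fun q => cmap K (Δ.link W) (Δ.contraction.link G)
    (Quotient.mk Δ.contractSetoid) hfπ q
  have hout_inj : Function.Injective (Quotient.out (s := Δ.contractSetoid)) :=
    Quotient.out_injective
  have hPS : ∀ q (z : (Δ.contraction.link G).Face q →₀ K), Pmap q (Smap q z) = z := by
    intro q z
    induction z using Finsupp.induction_linear with
    | zero => simp
    | add f g hf' hg' => rw [map_add, map_add, hf', hg']
    | single τ b =>
      have hb : (Finsupp.single τ b) = b • Finsupp.single τ (1 : K) := by
        rw [Finsupp.smul_single, smul_eq_mul, mul_one]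
      rw [hb, map_smul, map_smul]
      congr 1
      show cmap K (Δ.link W) (Δ.contraction.link G) (Quotient.mk Δ.contractSetoid) hfπ q
        (cmap K (Δ.contraction.link G) (Δ.link W) Quotient.out hfs q (Finsupp.single τ 1))
        = Finsupp.single τ 1
      rw [cmap_single]
      have hc1 : (τ.1.image Quotient.out).card = q := by
        rw [Finset.card_image_of_injective _ hout_inj, τ.2.2]
      rw [dif_pos hc1, inv2_out, pow_zero, one_smul, cmap_single]
      have hc2 : ((τ.1.image Quotient.out).image (Quotient.mk Δ.contractSetoid)).card = q := by
        rw [image_out_image_mk, τ.2.2]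
      rw [dif_pos hc2, inv2_mk_image_out, pow_zero, one_smul]
      congr 1
      exact Subtype.ext (image_out_image_mk τ.1)
  cases i with
  | ofNat n =>
    show LinearMap.ker ((Δ.contraction.link G).boundary K n)
      ≤ LinearMap.range ((Δ.contraction.link G).boundary K (n + 1))
    intro z hz
    rw [LinearMap.mem_ker] at hz
    obtain ⟨s, hs, hcard⟩ := hdim
    have hdimΔ : (Δ.link W).dimLT (Int.ofNat n) := by
      refine ⟨s.image Quotient.out, hfs s hs, ?_⟩
      rwa [Finset.card_image_of_injective _ hout_inj]
    have hempty : ∅ ∈ (Δ.link W).faces :=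
      (Δ.link W).down_closed (hfs s hs) (Finset.empty_subset _)
    have hRH := hCM ∅ hempty (Int.ofNat n)
      (by rw [AbstractComplex.link_empty]; exact hdimΔ)
    rw [AbstractComplex.link_empty] at hRH
    have hkr : LinearMap.ker ((Δ.link W).boundary K n)
        ≤ LinearMap.range ((Δ.link W).boundary K (n + 1)) := hRH
    have hz' : (Δ.link W).boundary K n (Smap (n + 1) z) = 0 := by
      have := LinearMap.congr_fun (cmap_comm K (Δ.contraction.link G) (Δ.link W)
        Quotient.out hfs n) z
      simp only [LinearMap.comp_apply] at this
      rw [← this, hz, map_zero]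
    obtain ⟨w, hw⟩ := hkr (LinearMap.mem_ker.mpr hz')
    refine ⟨Pmap (n + 2) w, ?_⟩
    have hcomm := LinearMap.congr_fun (cmap_comm K (Δ.link W) (Δ.contraction.link G)
      (Quotient.mk Δ.contractSetoid) hfπ (n + 1)) w
    simp only [LinearMap.comp_apply] at hcomm
    calc (Δ.contraction.link G).boundary K (n + 1) (Pmap (n + 2) w)
        = Pmap (n + 1) ((Δ.link W).boundary K (n + 1) w) := hcomm.symm
      _ = Pmap (n + 1) (Smap (n + 1) z) := by rw [hw]
      _ = z := hPS (n + 1) z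
  | negSucc n =>
    cases n with
    | zero =>
      show ⊤ ≤ LinearMap.range ((Δ.contraction.link G).boundary K 0)
      obtain ⟨s, hs, hcard⟩ := hdim
      have hsne : s.Nonempty := by
        have h1 : Int.negSucc 0 = -1 := rfl
        rw [h1] at hcard
        rw [← Finset.card_pos]
        omega
      obtain ⟨v, hv⟩ := hsne
      have hvface : {v} ∈ (Δ.contraction.link G).faces :=
        (Δ.contraction.link G).down_closed hs (Finset.singleton_subset_iff.mpr hv)
      have heface : (∅ : Finset (Quotient Δ.contractSetoid)) ∈ (Δ.contraction.link G).faces :=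
        (Δ.contraction.link G).down_closed hs (Finset.empty_subset _)
      set e : (Δ.contraction.link G).Face 0 := ⟨∅, heface, Finset.card_empty⟩ with hedef
      intro u _
      refine ⟨Finsupp.single ⟨{v}, hvface, Finset.card_singleton v⟩ (u e), ?_⟩
      have hb : (Finsupp.single (⟨{v}, hvface, Finset.card_singleton v⟩ :
          (Δ.contraction.link G).Face 1) (u e))
          = (u e) • Finsupp.single (⟨{v}, hvface, Finset.card_singleton v⟩ :
            (Δ.contraction.link G).Face 1) (1 : K) := by
        rw [Finsupp.smul_single, smul_eq_mul, mul_one]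
      rw [hb, map_smul, boundary_single_s13]
      have hattach : (({v} : Finset (Quotient Δ.contractSetoid)).attach)
          = {⟨v, Finset.mem_singleton_self v⟩} := by
        ext ⟨x, hx⟩
        simp [Subtype.ext_iff, Finset.mem_singleton.mp hx]
      rw [hattach, Finset.sum_singleton]
      have hfil : ({v} : Finset (Quotient Δ.contractSetoid)).filter (fun y => @LT.lt _ quotLinearOrder.toLT y v) = ∅ := by
        rw [Finset.filter_singleton, if_neg (show ¬ @LT.lt _ quotLinearOrder.toLT v v from fun h => lt_irrefl v.out h)]
      rw [hfil, Finset.card_empty, pow_zero, one_smul]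
      have hee : ∀ h1 h2, (⟨({v} : Finset (Quotient Δ.contractSetoid)).erase v, h1, h2⟩ :
          (Δ.contraction.link G).Face 0) = e :=
        fun h1 h2 => Subtype.ext (Finset.erase_singleton v)
      rw [hee, Finsupp.smul_single, smul_eq_mul, mul_one]
      apply Finsupp.ext
      intro a
      rw [show a = e from Subtype.ext (Finset.card_eq_zero.mp a.2.2)]
      rw [Finsupp.single_eq_same]
      all_goals simp [Finset.erase_singleton, heface]
    | succ m => trivial
end
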